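/- The map Φ₁ sending f to the function x ↦ log f'(x) − log f'(0) is a bijection from the group Diff¹₊(I) of orientation-preserving C¹ diffeomorphisms of I = [0,1] onto the space C[0,1]^# = {F ∈ C[0,1] : F(0) = 0}, with inverse F ↦ (x ↦ (∫₀ˣ exp(F(t)) dt)/(∫₀¹ exp(F(t)) dt)). -/

import Mathlib

/-- `f` is an orientation-preserving `C¹` diffeomorphism of `I = [0,1]`. -/
def IsC1DiffeoI (f : ℝ → ℝ) : Prop :=
  ContDiffOn ℝ 1 f (Set.Icc 0 1) ∧ f 0 = 0 ∧ f 1 = 1 ∧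
    Set.BijOn f (Set.Icc (0:ℝ) 1) (Set.Icc (0:ℝ) 1) ∧
    ∀ x ∈ Set.Icc (0:ℝ) 1, 0 < derivWithin f (Set.Icc 0 1) x

/-- `Φ₁(f) = log f' − log f'(0)`. -/
noncomputable def Phi1 (f : ℝ → ℝ) : ℝ → ℝ := fun x =>
  Real.log (derivWithin f (Set.Icc 0 1) x) - Real.log (derivWithin f (Set.Icc 0 1) 0)

open Set intervalIntegral in
lemma hasDerivAt_primitive {g : ℝ → ℝ} (hg : Continuous g) (x : ℝ) :
    HasDerivAt (fun u => ∫ t in (0:ℝ)..u, g t) (g x) x :=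
  integral_hasDerivAt_right (hg.intervalIntegrable 0 x)
    (hg.stronglyMeasurable.stronglyMeasurableAtFilter) hg.continuousAt

/-- `Φ₁` is a bijection from `Diff¹₊(I)` onto `C[0,1]^# = {F ∈ C[0,1] : F 0 = 0}`,
with inverse `F ↦ (x ↦ (∫₀ˣ exp(F t) dt) / (∫₀¹ exp(F t) dt))`. -/
theorem stmt_3 :
    -- `Φ₁` takes values in `C[0,1]^#`
    (∀ f : ℝ → ℝ, IsC1DiffeoI f →
        ContinuousOn (Phi1 f) (Set.Icc 0 1) ∧ Phi1 f 0 = 0) ∧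
    -- injectivity (as maps on `[0,1]`)
    (∀ f g : ℝ → ℝ, IsC1DiffeoI f → IsC1DiffeoI g →
        (∀ x ∈ Set.Icc (0:ℝ) 1, Phi1 f x = Phi1 g x) →
        ∀ x ∈ Set.Icc (0:ℝ) 1, f x = g x) ∧
    -- surjectivity, with the stated inverse formula
    (∀ F : ℝ → ℝ, ContinuousOn F (Set.Icc 0 1) → F 0 = 0 →
        ∃ f : ℝ → ℝ, IsC1DiffeoI f ∧
          (∀ x ∈ Set.Icc (0:ℝ) 1, Phi1 f x = F x) ∧
          (∀ x ∈ Set.Icc (0:ℝ) 1,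
            f x = (∫ t in (0:ℝ)..x, Real.exp (F t)) /
                  (∫ t in (0:ℝ)..(1:ℝ), Real.exp (F t)))) := by
  have hUD : UniqueDiffOn ℝ (Set.Icc (0:ℝ) 1) := uniqueDiffOn_Icc one_pos
  refine ⟨?_, ?_, ?_⟩
  · -- part 1
    rintro f ⟨hfC, hf0, hf1, hfB, hfp⟩
    constructor
    · have hcont : ContinuousOn (derivWithin f (Set.Icc 0 1)) (Set.Icc 0 1) :=
        hfC.continuousOn_derivWithin hUD le_rfl
      exact (hcont.log (fun x hx => (hfp x hx).ne')).sub continuousOn_const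
    · simp [Phi1]
  · -- part 2: injectivity
    rintro f g ⟨hfC, hf0, hf1, hfB, hfp⟩ ⟨hgC, hg0, hg1, hgB, hgp⟩ hEq
    set F' := derivWithin f (Set.Icc 0 1) with hF'
    set G' := derivWithin g (Set.Icc 0 1) with hG'
    have h00 : (0:ℝ) ∈ Set.Icc (0:ℝ) 1 := by norm_num
    have h11 : (1:ℝ) ∈ Set.Icc (0:ℝ) 1 := by norm_num
    set c : ℝ := F' 0 / G' 0 with hc
    have key : ∀ x ∈ Set.Icc (0:ℝ) 1, F' x = c * G' x := by
      intro x hx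
      have h1 := hEq x hx
      simp only [Phi1] at h1
      have h2 : Real.log (F' x * G' 0) = Real.log (G' x * F' 0) := by
        rw [Real.log_mul (hfp x hx).ne' (hgp 0 h00).ne',
          Real.log_mul (hgp x hx).ne' (hfp 0 h00).ne']
        linarith
      have h3 : F' x * G' 0 = G' x * F' 0 :=
        Real.log_injOn_pos (Set.mem_Ioi.mpr (mul_pos (hfp x hx) (hgp 0 h00)))
          (Set.mem_Ioi.mpr (mul_pos (hgp x hx) (hfp 0 h00))) h2
      rw [hc, div_mul_eq_mul_div, eq_div_iff (hgp 0 h00).ne']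
      linarith
    have hfd : DifferentiableOn ℝ f (Set.Icc 0 1) := hfC.differentiableOn one_ne_zero
    have hgd : DifferentiableOn ℝ g (Set.Icc 0 1) := hgC.differentiableOn one_ne_zero
    have hconst : ∀ x ∈ Set.Icc (0:ℝ) 1, f x - c * g x = f 0 - c * g 0 := by
      apply constant_of_derivWithin_zero
      · exact hfd.sub (hgd.const_mul c)
      · intro x hx
        have hx' : x ∈ Set.Icc (0:ℝ) 1 := Set.Ico_subset_Icc_self hx
        have hu : UniqueDiffWithinAt ℝ (Set.Icc (0:ℝ) 1) x := hUD x hx'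
        rw [derivWithin_fun_sub (hfd x hx') ((hgd x hx').const_mul c),
          derivWithin_const_mul c (hgd x hx')]
        rw [← hF', ← hG', key x hx']
        ring
    have hc1 : c = 1 := by
      have := hconst 1 h11
      rw [hf1, hg1, hf0, hg0] at this
      linarith
    intro x hx
    have := hconst x hx
    rw [hf0, hg0, hc1] at this
    linarith
  · -- part 3: surjectivity
    intro F hF hF0
    have hproj : Continuous fun t : ℝ => max 0 (min 1 t) :=
      continuous_const.max (continuous_const.min continuous_id)
    have hmem : ∀ t : ℝ, max 0 (min 1 t) ∈ Set.Icc (0:ℝ) 1 := fun t =>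
      ⟨le_max_left _ _, max_le zero_le_one (min_le_left _ _)⟩
    set Fc : ℝ → ℝ := fun t => F (max 0 (min 1 t)) with hFcdef
    have hFcCont : Continuous Fc := hF.comp_continuous hproj hmem
    have hFcEq : ∀ x ∈ Set.Icc (0:ℝ) 1, Fc x = F x := by
      intro x hx
      simp only [hFcdef]
      rw [min_eq_right hx.2, max_eq_right hx.1]
    set g : ℝ → ℝ := fun t => Real.exp (Fc t) with hgdef
    have hgCont : Continuous g := Real.continuous_exp.comp hFcCont
    have hgpos : ∀ t, 0 < g t := fun t => Real.exp_pos _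
    set c : ℝ := ∫ t in (0:ℝ)..1, g t with hcdef
    have hcpos : 0 < c :=
      intervalIntegral.intervalIntegral_pos_of_pos (hgCont.intervalIntegrable 0 1)
        (fun x => hgpos x) one_pos
    have hgcongr : ∀ x ∈ Set.Icc (0:ℝ) 1,
        (∫ t in (0:ℝ)..x, g t) = ∫ t in (0:ℝ)..x, Real.exp (F t) := by
      intro x hx
      apply intervalIntegral.integral_congr
      intro t ht
      rw [Set.uIcc_of_le hx.1] at ht
      have ht' : t ∈ Set.Icc (0:ℝ) 1 := Set.Icc_subset_Icc_right hx.2 ht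
      simp only [hgdef]
      rw [hFcEq t ht']
    have hcF : c = ∫ t in (0:ℝ)..1, Real.exp (F t) := hgcongr 1 (by norm_num)
    set f : ℝ → ℝ := fun x => (∫ t in (0:ℝ)..x, g t) / c with hfdef
    have hderiv : ∀ x, HasDerivAt f (g x / c) x := fun x =>
      (hasDerivAt_primitive hgCont x).div_const c
    have hdw : ∀ x ∈ Set.Icc (0:ℝ) 1, derivWithin f (Set.Icc 0 1) x = g x / c := by
      intro x hx
      exact ((hderiv x).hasDerivWithinAt).derivWithin (hUD x hx)
    have hderivf : deriv f = fun x => g x / c := funext fun x => (hderiv x).deriv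
    have hCD : ContDiff ℝ 1 f := by
      rw [contDiff_one_iff_deriv]
      exact ⟨fun x => (hderiv x).differentiableAt, by
        rw [hderivf]; exact hgCont.div_const c⟩
    have hf0 : f 0 = 0 := by simp [hfdef]
    have hf1 : f 1 = 1 := by
      simp only [hfdef, ← hcdef]
      exact div_self hcpos.ne'
    have hmono : StrictMono f :=
      strictMono_of_deriv_pos (fun x => by
        rw [hderivf]; exact div_pos (hgpos x) hcpos)
    have hmaps : Set.MapsTo f (Set.Icc (0:ℝ) 1) (Set.Icc (0:ℝ) 1) := by
      intro x hx
      constructor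
      · rw [← hf0]; exact hmono.le_iff_le.mpr hx.1
      · rw [← hf1]; exact hmono.le_iff_le.mpr hx.2
    have hsurj : Set.SurjOn f (Set.Icc (0:ℝ) 1) (Set.Icc (0:ℝ) 1) := by
      have := intermediate_value_Icc (zero_le_one) hCD.continuous.continuousOn
        (a := (0:ℝ)) (b := 1)
      rwa [hf0, hf1] at this
    refine ⟨f, ⟨hCD.contDiffOn, hf0, hf1, ⟨hmaps, hmono.injective.injOn, hsurj⟩, ?_⟩, ?_, ?_⟩
    · intro x hx
      rw [hdw x hx]
      exact div_pos (hgpos x) hcpos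
    · intro x hx
      simp only [Phi1]
      rw [hdw x hx, hdw 0 (by norm_num),
        Real.log_div (hgpos x).ne' hcpos.ne', Real.log_div (hgpos 0).ne' hcpos.ne']
      simp only [hgdef, Real.log_exp]
      rw [hFcEq x hx, hFcEq 0 (by norm_num), hF0]
      ring
    · intro x hx
      simp only [hfdef]
      rw [hgcongr x hx, ← hcF]
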